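/- Let V be a finite-dimensional vector space, A an endomorphism, λ an eigenvalue of A, and b ∈ V. Then the intersection of the eigenspace of A for λ with the A-cyclic subspace span{A^i b : i ≥ 0} has dimension at most 1. -/

import Mathlib

open Polynomial

noncomputable def phiAux {K : Type*} [Field K] {V : Type*} [AddCommGroup V] [Module K V]
    (A : V →ₗ[K] V) (b : V) : Polynomial K →ₗ[K] V where
  toFun p := (aeval A p) b
  map_add' p q := by simp
  map_smul' c p := by simp

lemma phiAux_apply {K : Type*} [Field K] {V : Type*} [AddCommGroup V] [Module K V]
    (A : V →ₗ[K] V) (b : V) (p : Polynomial K) : phiAux A b p = (aeval A p) b := rfl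

lemma span_eq_range_phiAux {K : Type*} [Field K] {V : Type*} [AddCommGroup V] [Module K V]
    (A : V →ₗ[K] V) (b : V) :
    Submodule.span K (Set.range fun i : ℕ => (A ^ i) b) = LinearMap.range (phiAux A b) := by
  apply le_antisymm
  · rw [Submodule.span_le]
    rintro _ ⟨i, rfl⟩
    exact ⟨X ^ i, by simp [phiAux_apply]⟩
  · rintro _ ⟨p, rfl⟩
    induction p using Polynomial.induction_on' with
    | add p q hp hq => rw [map_add]; exact Submodule.add_mem _ hp hq
    | monomial n a =>
        rw [phiAux_apply, aeval_monomial]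
        have : (algebraMap K (V →ₗ[K] V) a * A ^ n) b = a • (A ^ n) b := by
          simp [Algebra.smul_def]
        rw [this]
        exact Submodule.smul_mem _ _ (Submodule.subset_span ⟨n, rfl⟩)

lemma aeval_eigenvec {K : Type*} [Field K] {V : Type*} [AddCommGroup V] [Module K V]
    {A : V →ₗ[K] V} {lam : K} {v : V} (hv : A v = lam • v)
    (s : Polynomial K) : (aeval A s) v = s.eval lam • v := by
  have hpow : ∀ n : ℕ, (A ^ n) v = lam ^ n • v := by
    intro n; induction n with
    | zero => simp
    | succ n ih =>
        rw [pow_succ, pow_succ, Module.End.mul_apply, hv, map_smul, ih, smul_smul, mul_comm]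
  induction s using Polynomial.induction_on' with
  | add p q hp hq => simp [hp, hq, add_smul]
  | monomial n a =>
      rw [aeval_monomial]
      have : (algebraMap K (V →ₗ[K] V) a * A ^ n) v = a • (A ^ n) v := by
        simp [Algebra.smul_def]
      rw [this, hpow, eval_monomial, smul_smul]

theorem eigenspace_cyclic_inter_dim {K : Type*} [Field K]
    (V : Type*) [AddCommGroup V] [Module K V] [FiniteDimensional K V]
    (A : V →ₗ[K] V) (lam : K) (hlam : Module.End.HasEigenvalue A lam) (b : V) :
    Module.finrank K
        ↥(Module.End.eigenspace A lam ⊓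
            Submodule.span K (Set.range fun i : ℕ => (A ^ i) b)) ≤ 1 := by
  classical
  set E := Module.End.eigenspace A lam with hE
  set S := Submodule.span K (Set.range fun i : ℕ => (A ^ i) b) with hS
  by_cases hbot : E ⊓ S = ⊥
  · rw [hbot]
    simp
  · obtain ⟨w0, hw0mem, hw0ne⟩ := Submodule.exists_mem_ne_zero_of_ne_bot hbot
    have hrange : S = LinearMap.range (phiAux A b) := span_eq_range_phiAux A b
    set P : ℕ → Prop := fun n => ∃ p : Polynomial K, p.Monic ∧ p.natDegree = n ∧
      phiAux A b p ∈ E ∧ phiAux A b p ≠ 0 with hPdef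
    -- normalization helper
    have norm : ∀ q : Polynomial K, phiAux A b q ∈ E → phiAux A b q ≠ 0 → P q.natDegree := by
      intro q hqE hqne
      have hq0 : q ≠ 0 := fun h => hqne (by rw [h, map_zero])
      have hlc : q.leadingCoeff ≠ 0 := leadingCoeff_ne_zero.mpr hq0
      refine ⟨q * C q.leadingCoeff⁻¹, monic_mul_leadingCoeff_inv hq0, ?_, ?_, ?_⟩
      · rw [natDegree_mul_C (inv_ne_zero hlc)]
      · have : q * C q.leadingCoeff⁻¹ = q.leadingCoeff⁻¹ • q := by
          rw [Polynomial.smul_eq_C_mul, mul_comm]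
        rw [this, map_smul]
        exact Submodule.smul_mem _ _ hqE
      · have : q * C q.leadingCoeff⁻¹ = q.leadingCoeff⁻¹ • q := by
          rw [Polynomial.smul_eq_C_mul, mul_comm]
        rw [this, map_smul]
        exact smul_ne_zero (inv_ne_zero hlc) hqne
    have hP : ∃ n, P n := by
      obtain ⟨q, hq⟩ : ∃ q, phiAux A b q = w0 := by
        have := hw0mem.2; rw [hrange] at this; exact this
      exact ⟨q.natDegree, norm q (by rw [hq]; exact hw0mem.1) (by rw [hq]; exact hw0ne)⟩
    obtain ⟨p, hpmonic, hpdeg, hpE, hpne⟩ := Nat.find_spec hP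
    set v := phiAux A b p with hv
    have hvE : A v = lam • v := by
      have := hpE
      rwa [hE, Module.End.mem_eigenspace_iff] at this
    have hle : E ⊓ S ≤ K ∙ v := by
      rintro w ⟨hwE, hwS⟩
      rw [hrange] at hwS
      obtain ⟨q, hq⟩ := hwS
      have hdiv : q %ₘ p + p * (q /ₘ p) = q := modByMonic_add_div q p
      have hw : w = phiAux A b (q %ₘ p) + (q /ₘ p).eval lam • v := by
        have h1 : phiAux A b (p * (q /ₘ p)) = (q /ₘ p).eval lam • v := by
          rw [mul_comm, phiAux_apply, map_mul, Module.End.mul_apply]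
          exact aeval_eigenvec hvE (q /ₘ p)
        calc w = phiAux A b q := hq.symm
          _ = phiAux A b (q %ₘ p) + phiAux A b (p * (q /ₘ p)) := by
                rw [← map_add, hdiv]
          _ = _ := by rw [h1]
      have hr0 : phiAux A b (q %ₘ p) = 0 := by
        by_contra hrne
        have hrE : phiAux A b (q %ₘ p) ∈ E := by
          have : phiAux A b (q %ₘ p) = w - (q /ₘ p).eval lam • v := by
            rw [hw]; abel
          rw [this]
          exact Submodule.sub_mem _ hwE (Submodule.smul_mem _ _ hpE)
        have hr0' : q %ₘ p ≠ 0 := fun h => hrne (by rw [h, map_zero])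
        have hdeglt : (q %ₘ p).natDegree < p.natDegree :=
          natDegree_lt_natDegree hr0' (degree_modByMonic_lt q hpmonic)
        have := Nat.find_min hP (hpdeg ▸ hdeglt) (norm _ hrE hrne)
        exact this
      have : w = (q /ₘ p).eval lam • v := by rw [hw, hr0, zero_add]
      rw [this]
      exact Submodule.smul_mem _ _ (Submodule.mem_span_singleton_self v)
    calc Module.finrank K ↥(E ⊓ S) ≤ Module.finrank K ↥(K ∙ v) :=
          Submodule.finrank_mono hle
      _ = 1 := finrank_span_singleton hpne
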